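/- For system (A), the parabola g₃(x,y) = (1 + c)·x − (1 + c)·x² + y = 0 is an invariant algebraic curve if and only if e = −f·(1 + c); moreover, when e = −f·(1 + c) the polynomial identity p·∂g₃/∂x + q·∂g₃/∂y = H₃·g₃ holds with cofactor H₃(x,y) = c − f − 2c·x. -/

import Mathlib

open MvPolynomial

/-- Right-hand side p of system (A). -/
noncomputable def pA (c : ℝ) : MvPolynomial (Fin 2) ℝ :=
  C c * X 0 + X 1 - C c * X 0 ^ 2

/-- Right-hand side q of system (A). -/
noncomputable def qA (c e f : ℝ) : MvPolynomial (Fin 2) ℝ :=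
  C e * X 0 + C (-1 + (e + f) / c) * X 1 - C e * X 0 ^ 2 + C 2 * X 0 * X 1

/-- The parabola `g₃ = (1 + c)x - (1 + c)x² + y`. -/
noncomputable def g3A (c : ℝ) : MvPolynomial (Fin 2) ℝ :=
  C (1 + c) * X 0 - C (1 + c) * X 0 ^ 2 + X 1

lemma C2' : (C 2 : MvPolynomial (Fin 2) ℝ) = 2 := map_ofNat _ 2

lemma d0 (c : ℝ) : pderiv 0 (g3A c) = C (1+c) - C (2*(1+c)) * X 0 := by
  simp [g3A, pderiv_X, pderiv_C, pderiv_mul, pderiv_pow, C_mul, C2']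
  ring

lemma d1 (c : ℝ) : pderiv 1 (g3A c) = 1 := by
  simp [g3A, pderiv_X, pderiv_C, pderiv_mul, pderiv_pow]

lemma identity_g3 (c f : ℝ) (hc : c ≠ 0) :
    pA c * pderiv 0 (g3A c) + qA c (-f*(1+c)) f * pderiv 1 (g3A c)
      = (C (c - f) - C (2 * c) * X 0) * g3A c := by
  have h : (-f*(1+c) + f) / c = -f := by field_simp; ring
  rw [d0, d1, pA, qA, g3A, h]
  simp only [map_add, map_mul, map_sub, map_neg, map_one, C2', C_mul]
  ring

/-- For system (A), the parabola `g₃ = 0` is an invariant algebraic curve if and only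
if `e = -f(1 + c)`; moreover in that case the identity holds with cofactor
`H₃ = c - f - 2c·x`. -/
theorem invariant_parabola_g3_sysA (c e f : ℝ) (hc : c ≠ 0) :
    ((∃ K : MvPolynomial (Fin 2) ℝ,
        pA c * pderiv 0 (g3A c) + qA c e f * pderiv 1 (g3A c)
          = K * g3A c) ↔ e = -f * (1 + c)) ∧
    (e = -f * (1 + c) →
      pA c * pderiv 0 (g3A c) + qA c e f * pderiv 1 (g3A c)
        = (C (c - f) - C (2 * c) * X 0) * g3A c) := by
  constructor
  · constructor
    · rintro ⟨K, hK⟩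
      have h2 := congrArg (eval ![(2:ℝ), 2 + 2*c]) hK
      simp [pA, qA, g3A, d0, d1, eval_C, eval_X] at h2
      field_simp at h2
      linear_combination h2
    · intro h
      subst h
      exact ⟨C (c - f) - C (2 * c) * X 0, identity_g3 c f hc⟩
  · intro h; subst h; exact identity_g3 c f hc
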